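/- arXiv:1907.06051 — 5 statements merged into one kernel-verified Lean document; each statement's English description precedes it below -/
import Mathlib

section
/- Let G₁ = (V₁,E₁) and G₂ = (V₂,E₂) be two finite d-regular simple graphs with the same number of vertices, and run the same message-passing scheme (same constant initial feature h₀ and same functions AGG_t, MERGE_t) on both graphs. Then for every iteration t ≥ 0 and all vertices v₁ ∈ V₁ and v₂ ∈ V₂, the features coincide: h₁^t(v₁) = h₂^t(v₂). -/
open scoped Classical in
/-- The node features computed by a message-passing scheme (standard GNN) on a finite
simple graph `G`: `h 0 v = h₀` and
`h (t+1) v = MERGE (t+1) (h t v) (AGG (t+1) M_v)`, where `M_v` is the multiset of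
features at iteration `t` of the neighbors of `v`. -/
noncomputable def gnnFeat {V α β : Type*} [Fintype V] (G : SimpleGraph V)
    (h₀ : α) (AGG : ℕ → Multiset α → β) (MERGE : ℕ → α → β → α) : ℕ → V → α
  | 0, _ => h₀
  | t + 1, v =>
      MERGE (t + 1) (gnnFeat G h₀ AGG MERGE t v)
        (AGG (t + 1)
          (((Finset.univ.filter fun u => G.Adj v u)).val.map (gnnFeat G h₀ AGG MERGE t)))

open scoped Classical in
/-- Running the same message-passing scheme on two finite `d`-regular simple graphs with
the same number of vertices produces identical node features at every iteration. -/
theorem gnn_same_feature_on_regular_pair {V₁ V₂ α β : Type*} [Fintype V₁] [Fintype V₂]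
    (G₁ : SimpleGraph V₁) (G₂ : SimpleGraph V₂) (d : ℕ)
    (hcard : Fintype.card V₁ = Fintype.card V₂)
    (hreg₁ : G₁.IsRegularOfDegree d) (hreg₂ : G₂.IsRegularOfDegree d)
    (h₀ : α) (AGG : ℕ → Multiset α → β) (MERGE : ℕ → α → β → α) :
    ∀ (t : ℕ) (v₁ : V₁) (v₂ : V₂),
      gnnFeat G₁ h₀ AGG MERGE t v₁ = gnnFeat G₂ h₀ AGG MERGE t v₂ := by
  intro t
  induction t with
  | zero => intro v₁ v₂; rfl
  | succ t ih =>
    intro v₁ v₂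
    set c := gnnFeat G₂ h₀ AGG MERGE t v₂ with hc
    have hdeg₁ : (Finset.univ.filter fun u => G₁.Adj v₁ u).card = d := by
      have : (Finset.univ.filter fun u => G₁.Adj v₁ u) = G₁.neighborFinset v₁ := by
        ext u; simp [SimpleGraph.neighborFinset_eq_filter]
      rw [this]; exact hreg₁ v₁
    have hdeg₂ : (Finset.univ.filter fun u => G₂.Adj v₂ u).card = d := by
      have : (Finset.univ.filter fun u => G₂.Adj v₂ u) = G₂.neighborFinset v₂ := by
        ext u; simp [SimpleGraph.neighborFinset_eq_filter]
      rw [this]; exact hreg₂ v₂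
    have h1 : ((Finset.univ.filter fun u => G₁.Adj v₁ u)).val.map
        (gnnFeat G₁ h₀ AGG MERGE t) = Multiset.replicate d c := by
      rw [Multiset.eq_replicate]
      refine ⟨by rw [Multiset.card_map]; exact hdeg₁, ?_⟩
      intro b hb
      obtain ⟨u, _, rfl⟩ := Multiset.mem_map.mp hb
      exact ih u v₂
    have h2 : ((Finset.univ.filter fun u => G₂.Adj v₂ u)).val.map
        (gnnFeat G₂ h₀ AGG MERGE t) = Multiset.replicate d c := by
      rw [Multiset.eq_replicate]
      refine ⟨by rw [Multiset.card_map]; exact hdeg₂, ?_⟩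
      intro b hb
      obtain ⟨u, _, rfl⟩ := Multiset.mem_map.mp hb
      exact ((ih v₁ u).symm.trans (ih v₁ v₂))
    show MERGE (t + 1) _ _ = MERGE (t + 1) _ _
    rw [ih v₁ v₂, h1, h2]
end

section
/- Let G₁ = (V₁,E₁) and G₂ = (V₂,E₂) be two finite d-regular simple graphs with the same number of vertices, run the same message-passing scheme on both graphs for T iterations, and let READOUT : Multiset α → γ be any function. Then the graph-level representations coincide: READOUT of the multiset {h₁^T(v) : v ∈ V₁} equals READOUT of the multiset {h₂^T(v) : v ∈ V₂}. -/
/-- The common value of all node features on a `d`-regular graph. -/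
noncomputable def gnnConst {α β : Type*} (d : ℕ) (h₀ : α) (AGG : ℕ → Multiset α → β)
    (MERGE : ℕ → α → β → α) : ℕ → α
  | 0 => h₀
  | t + 1 =>
      MERGE (t + 1) (gnnConst d h₀ AGG MERGE t)
        (AGG (t + 1) (Multiset.replicate d (gnnConst d h₀ AGG MERGE t)))

open scoped Classical in
theorem gnnFeat_eq_const {V α β : Type*} [Fintype V] (G : SimpleGraph V) (d : ℕ)
    (hreg : G.IsRegularOfDegree d) (h₀ : α) (AGG : ℕ → Multiset α → β)
    (MERGE : ℕ → α → β → α) : ∀ t v, gnnFeat G h₀ AGG MERGE t v = gnnConst d h₀ AGG MERGE t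
  | 0, _ => rfl
  | t + 1, v => by
    have ih := fun u => gnnFeat_eq_const G d hreg h₀ AGG MERGE t u
    show MERGE _ _ _ = MERGE _ _ _
    rw [ih v]
    congr 1
    congr 1
    have hfil : (Finset.univ.filter fun u => G.Adj v u) = G.neighborFinset v := by
      ext u; simp [SimpleGraph.neighborFinset]
    rw [hfil]
    have hcard : (G.neighborFinset v).val.card = d := hreg v
    calc (G.neighborFinset v).val.map (gnnFeat G h₀ AGG MERGE t)
        = (G.neighborFinset v).val.map (fun _ => gnnConst d h₀ AGG MERGE t) :=
          Multiset.map_congr rfl (fun u _ => ih u)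
      _ = Multiset.replicate d (gnnConst d h₀ AGG MERGE t) := by
          rw [Multiset.map_const', hcard]

open scoped Classical in
/-- Running the same message-passing scheme for `T` iterations on two finite `d`-regular
simple graphs with the same number of vertices, any readout function applied to the
multiset of final node features yields the same graph-level representation. -/
theorem gnn_same_readout_on_regular_pair {V₁ V₂ α β γ : Type*} [Fintype V₁] [Fintype V₂]
    (G₁ : SimpleGraph V₁) (G₂ : SimpleGraph V₂) (d : ℕ)
    (hcard : Fintype.card V₁ = Fintype.card V₂)
    (hreg₁ : G₁.IsRegularOfDegree d) (hreg₂ : G₂.IsRegularOfDegree d)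
    (h₀ : α) (AGG : ℕ → Multiset α → β) (MERGE : ℕ → α → β → α)
    (T : ℕ) (READOUT : Multiset α → γ) :
    READOUT ((Finset.univ : Finset V₁).val.map (gnnFeat G₁ h₀ AGG MERGE T)) =
      READOUT ((Finset.univ : Finset V₂).val.map (gnnFeat G₂ h₀ AGG MERGE T)) := by
  congr 1
  calc (Finset.univ : Finset V₁).val.map (gnnFeat G₁ h₀ AGG MERGE T)
      = Multiset.replicate (Fintype.card V₁) (gnnConst d h₀ AGG MERGE T) := by
        rw [Multiset.map_congr rfl fun v _ => gnnFeat_eq_const G₁ d hreg₁ h₀ AGG MERGE T v,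
          Multiset.map_const']
        rfl
    _ = (Finset.univ : Finset V₂).val.map (gnnFeat G₂ h₀ AGG MERGE T) := by
        rw [Multiset.map_congr rfl fun v _ => gnnFeat_eq_const G₂ d hreg₂ h₀ AGG MERGE T v,
          Multiset.map_const', hcard]
        rfl
end

section
/- Let 𝒳 be a countable type and let N ∈ ℕ with N ≥ 1. Then there exists a function f' : 𝒳 → ℝ with f'(x) > 0 for all x, such that for every multiset S over 𝒳 of cardinality less than N the sum Σ_{x ∈ S} f'(x) is strictly less than 1, and the map S ↦ Σ_{x ∈ S} f'(x) is injective on the collection of multisets over 𝒳 of cardinality less than N. -/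
open Multiset

private lemma aux_lt (N : ℕ) (A B : Multiset ℕ) (m : ℕ) (hA : Multiset.card A < N)
    (hmB : m ∈ B) (hall : ∀ a ∈ A, m + 1 ≤ a) :
    (A.map (fun k => ((N:ℝ)+1)⁻¹ ^ (k+1))).sum < (B.map (fun k => ((N:ℝ)+1)⁻¹ ^ (k+1))).sum := by
  set r : ℝ := ((N:ℝ)+1)⁻¹ with hr
  have hr0 : 0 < r := by positivity
  have hr1 : r ≤ 1 := by
    rw [hr, inv_le_one_iff₀]
    right; linarith [Nat.cast_nonneg (α := ℝ) N]
  have hpow : (0:ℝ) < r ^ (m+2) := pow_pos hr0 _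
  have h1 : (A.map (fun k => r ^ (k+1))).sum ≤ (Multiset.card A : ℝ) * (r ^ (m+2)) := by
    have := Multiset.sum_le_card_nsmul (A.map (fun k => r ^ (k+1))) (r ^ (m+2)) ?_
    · simpa [Multiset.card_map, nsmul_eq_mul] using this
    · intro x hx
      simp only [Multiset.mem_map] at hx
      obtain ⟨a, ha, rfl⟩ := hx
      exact pow_le_pow_of_le_one hr0.le hr1 (by have := hall a ha; omega)
  have h2 : (Multiset.card A : ℝ) * (r ^ (m+2)) < (N : ℝ) * (r ^ (m+2)) :=
    mul_lt_mul_of_pos_right (by exact_mod_cast hA) hpow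
  have h3 : (N : ℝ) * (r ^ (m+2)) ≤ r ^ (m+1) := by
    have : (N : ℝ) * r ≤ 1 := by
      rw [hr, ← div_eq_mul_inv, div_le_one (by positivity)]
      linarith
    calc (N : ℝ) * (r ^ (m+2)) = ((N:ℝ) * r) * r ^ (m+1) := by ring
    _ ≤ 1 * r ^ (m+1) := by
        apply mul_le_mul_of_nonneg_right this (pow_pos hr0 _).le
    _ = r ^ (m+1) := one_mul _
  have h4 : r ^ (m+1) ≤ (B.map (fun k => r ^ (k+1))).sum := by
    apply Multiset.single_le_sum
    · intro x hx
      simp only [Multiset.mem_map] at hx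
      obtain ⟨a, _, rfl⟩ := hx
      positivity
    · exact Multiset.mem_map_of_mem _ hmB
  linarith

private lemma key_nat (N : ℕ) :
    ∀ n : ℕ, ∀ A B : Multiset ℕ, Multiset.card A + Multiset.card B = n →
      Multiset.card A < N → Multiset.card B < N →
      (A.map (fun k => ((N:ℝ)+1)⁻¹ ^ (k+1))).sum = (B.map (fun k => ((N:ℝ)+1)⁻¹ ^ (k+1))).sum →
      A = B := by
  intro n
  induction n using Nat.strong_induction_on with
  | _ n ih =>
    intro A B hn hA hB hsum
    rcases eq_or_ne (A + B) 0 with h0 | h0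
    · have h1 : A = 0 ∧ B = 0 := by
        have hc : Multiset.card (A + B) = 0 := by rw [h0]; rfl
        rw [Multiset.card_add] at hc
        constructor <;> (rw [← Multiset.card_eq_zero]; omega)
      rw [h1.1, h1.2]
    · have hne : (A + B).toFinset.Nonempty := by
        rw [Multiset.toFinset_nonempty]
        exact h0
      set m := (A + B).toFinset.min' hne with hm
      have hmmem : m ∈ A + B := by
        have := (A + B).toFinset.min'_mem hne
        rwa [Multiset.mem_toFinset] at this
      have hmle : ∀ x ∈ A + B, m ≤ x := fun x hx =>
        Finset.min'_le _ x (Multiset.mem_toFinset.mpr hx)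
      have hmA : m ∈ A := by
        by_contra hmA
        have hmB : m ∈ B := by
          rcases Multiset.mem_add.mp hmmem with h | h
          · exact absurd h hmA
          · exact h
        have hall : ∀ a ∈ A, m + 1 ≤ a := by
          intro a ha
          have h1 := hmle a (Multiset.mem_add.mpr (Or.inl ha))
          have : a ≠ m := fun h => hmA (h ▸ ha)
          omega
        exact absurd hsum (ne_of_lt (aux_lt N A B m hA hmB hall))
      have hmB : m ∈ B := by
        by_contra hmB
        have hall : ∀ a ∈ B, m + 1 ≤ a := by
          intro a ha
          have h1 := hmle a (Multiset.mem_add.mpr (Or.inr ha))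
          have : a ≠ m := fun h => hmB (h ▸ ha)
          omega
        exact absurd hsum.symm (ne_of_lt (aux_lt N B A m hB hmA hall))
      have hAe : A = m ::ₘ A.erase m := (Multiset.cons_erase hmA).symm
      have hBe : B = m ::ₘ B.erase m := (Multiset.cons_erase hmB).symm
      have hsum' : ((A.erase m).map (fun k => ((N:ℝ)+1)⁻¹ ^ (k+1))).sum =
          ((B.erase m).map (fun k => ((N:ℝ)+1)⁻¹ ^ (k+1))).sum := by
        rw [hAe, hBe] at hsum
        simp only [Multiset.map_cons, Multiset.sum_cons] at hsum
        linarith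
      have hcA : Multiset.card (A.erase m) = Multiset.card A - 1 :=
        Multiset.card_erase_of_mem hmA
      have hcB : Multiset.card (B.erase m) = Multiset.card B - 1 :=
        Multiset.card_erase_of_mem hmB
      have hApos : 0 < Multiset.card A := Multiset.card_pos_iff_exists_mem.mpr ⟨m, hmA⟩
      have hBpos : 0 < Multiset.card B := Multiset.card_pos_iff_exists_mem.mpr ⟨m, hmB⟩
      have := ih (Multiset.card (A.erase m) + Multiset.card (B.erase m)) (by omega)
        (A.erase m) (B.erase m) rfl (by omega) (by omega) hsum'
      rw [hAe, hBe, this]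

/-- For a countable type `𝒳` and `N ≥ 1`, there is a positive function `f' : 𝒳 → ℝ` such
that the sum of `f'` over any multiset of cardinality less than `N` is strictly less than
`1`, and this sum determines the multiset uniquely among multisets of cardinality less
than `N`. -/
theorem exists_injective_multiset_sum {𝒳 : Type*} [Countable 𝒳] (N : ℕ) (hN : 1 ≤ N) :
    ∃ f' : 𝒳 → ℝ,
      (∀ x, 0 < f' x) ∧
      (∀ S : Multiset 𝒳, Multiset.card S < N → (S.map f').sum < 1) ∧
      (∀ S T : Multiset 𝒳, Multiset.card S < N → Multiset.card T < N →
        (S.map f').sum = (T.map f').sum → S = T) := by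
  obtain ⟨e, he⟩ := exists_injective_nat 𝒳
  set r : ℝ := ((N:ℝ)+1)⁻¹ with hr
  have hr0 : 0 < r := by positivity
  have hr1 : r ≤ 1 := by
    rw [hr, inv_le_one_iff₀]; right; linarith [Nat.cast_nonneg (α := ℝ) N]
  refine ⟨fun x => r ^ (e x + 1), fun x => pow_pos hr0 _, ?_, ?_⟩
  · intro S hS
    have h1 : (S.map (fun x => r ^ (e x + 1))).sum ≤ (Multiset.card S : ℝ) * r := by
      have := Multiset.sum_le_card_nsmul (S.map (fun x => r ^ (e x + 1))) r ?_
      · simpa [Multiset.card_map, nsmul_eq_mul] using this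
      · intro x hx
        simp only [Multiset.mem_map] at hx
        obtain ⟨a, _, rfl⟩ := hx
        calc r ^ (e a + 1) ≤ r ^ 1 := pow_le_pow_of_le_one hr0.le hr1 (by omega)
        _ = r := pow_one r
    have h2 : (Multiset.card S : ℝ) * r < (N : ℝ) * r :=
      mul_lt_mul_of_pos_right (by exact_mod_cast hS) hr0
    have h3 : (N : ℝ) * r < 1 := by
      rw [hr, ← div_eq_mul_inv, div_lt_one (by positivity)]
      linarith
    linarith
  · intro S T hS hT hsum
    have hmap : ∀ U : Multiset 𝒳, (U.map (fun x => r ^ (e x + 1))).sum =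
        ((U.map e).map (fun k => ((N:ℝ)+1)⁻¹ ^ (k+1))).sum := by
      intro U
      rw [Multiset.map_map]
      rfl
    have := key_nat N (Multiset.card (S.map e) + Multiset.card (T.map e)) (S.map e) (T.map e)
      rfl (by simpa using hS) (by simpa using hT) (by rw [← hmap, ← hmap]; exact hsum)
    exact Multiset.map_injective he this
end

section
/- Let 𝒳 be a countable type and let N, r ∈ ℕ with N ≥ 1. Then there exist functions f_i : 𝒳 → ℝ for each i ∈ {0, 1, …, r} and a function f' : 𝒳 → ℝ such that the map sending a triple (i, c, S), with i ∈ {0, …, r}, c ∈ 𝒳, and S a multiset over 𝒳 of cardinality less than N, to the real number f_i(c) + Σ_{x ∈ S} f'(x) is injective on the set of all such triples. -/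
/-- Base-`B` expansions with digits `< B` are unique (on any initial segment). -/
private lemma base_digits_inj (B : ℕ) (hB : 1 < B) :
    ∀ (k : ℕ) (g h : ℕ → ℕ), (∀ n, g n < B) → (∀ n, h n < B) →
      (∑ n ∈ Finset.range k, g n * B ^ n) = (∑ n ∈ Finset.range k, h n * B ^ n) →
      ∀ n < k, g n = h n := by
  intro k
  induction k with
  | zero => intro g h _ _ _ n hn; omega
  | succ k IH =>
    intro g h hg hh hsum n hn
    rw [Finset.sum_range_succ' (fun n => g n * B ^ n), Finset.sum_range_succ' (fun n => h n * B ^ n)] at hsum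
    have hg' : ∑ i ∈ Finset.range k, g (i + 1) * B ^ (i + 1)
        = (∑ i ∈ Finset.range k, g (i + 1) * B ^ i) * B := by
      rw [Finset.sum_mul]; apply Finset.sum_congr rfl; intro i _; ring
    have hh' : ∑ i ∈ Finset.range k, h (i + 1) * B ^ (i + 1)
        = (∑ i ∈ Finset.range k, h (i + 1) * B ^ i) * B := by
      rw [Finset.sum_mul]; apply Finset.sum_congr rfl; intro i _; ring
    rw [hg', hh', pow_zero, mul_one] at hsum
    have h0 : g 0 = h 0 := by
      have := congrArg (· % B) hsum
      simpa [Nat.add_comm, Nat.add_mul_mod_self_right, Nat.mod_eq_of_lt (hg 0),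
        Nat.mod_eq_of_lt (hh 0)] using this
    have hrest : (∑ i ∈ Finset.range k, g (i + 1) * B ^ i)
        = ∑ i ∈ Finset.range k, h (i + 1) * B ^ i := by
      have hB0 : 0 < B := by omega
      have : (∑ i ∈ Finset.range k, g (i + 1) * B ^ i) * B
          = (∑ i ∈ Finset.range k, h (i + 1) * B ^ i) * B := by omega
      exact Nat.eq_of_mul_eq_mul_right hB0 this
    rcases n with _ | m
    · exact h0
    · exact IH (fun n => g (n + 1)) (fun n => h (n + 1)) (fun n => hg _) (fun n => hh _)
        hrest m (by omega)

/-- A multiset of naturals with all multiplicities `< B` is determined by the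
sum of the corresponding powers of `B`. -/
private lemma multiset_pow_sum_inj (B : ℕ) (hB : 1 < B) (s t : Multiset ℕ)
    (hs : ∀ n, s.count n < B) (ht : ∀ n, t.count n < B)
    (hsum : (s.map (B ^ ·)).sum = (t.map (B ^ ·)).sum) : s = t := by
  set k : ℕ := s.sum + t.sum + 1 with hk
  have hsk : ∀ n ∈ s, n < k := by
    intro n hn
    have := Multiset.single_le_sum (fun x _ => Nat.zero_le x) n hn
    omega
  have htk : ∀ n ∈ t, n < k := by
    intro n hn
    have := Multiset.single_le_sum (fun x _ => Nat.zero_le x) n hn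
    omega
  have key : ∀ (u : Multiset ℕ), (∀ n ∈ u, n < k) →
      (u.map (B ^ ·)).sum = ∑ n ∈ Finset.range k, u.count n * B ^ n := by
    intro u hu
    have hsub : u.toFinset ⊆ Finset.range k := fun n hn =>
      Finset.mem_range.mpr (hu n (Multiset.mem_toFinset.mp hn))
    rw [Finset.sum_multiset_map_count, Finset.sum_subset hsub (fun n _ hn => by
      simp [Multiset.count_eq_zero_of_notMem (fun h => hn (Multiset.mem_toFinset.mpr h))])]
    simp [smul_eq_mul]
  have hcounts := base_digits_inj B hB k s.count t.count hs ht
    (by rw [← key s hsk, ← key t htk]; exact hsum)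
  ext n
  by_cases hn : n < k
  · exact hcounts n hn
  · rw [Multiset.count_eq_zero_of_notMem (fun h => hn (hsk n h)),
      Multiset.count_eq_zero_of_notMem (fun h => hn (htk n h))]

/-- For a countable type `𝒳`, `N ≥ 1` and `r ∈ ℕ`, there are functions
`f i : 𝒳 → ℝ` for `i ∈ {0, …, r}` and `f' : 𝒳 → ℝ` such that the map
`(i, c, S) ↦ f i c + Σ_{x ∈ S} f' x` is injective on triples of an index
`i ∈ {0, …, r}`, an element `c ∈ 𝒳`, and a multiset `S` over `𝒳` of cardinality
less than `N`. -/
theorem exists_injective_indexed_pair_encoding {𝒳 : Type*} [Countable 𝒳]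
    (N r : ℕ) (hN : 1 ≤ N) :
    ∃ (f : Fin (r + 1) → 𝒳 → ℝ) (f' : 𝒳 → ℝ),
      ∀ (i j : Fin (r + 1)) (c c' : 𝒳) (S T : Multiset 𝒳),
        Multiset.card S < N → Multiset.card T < N →
        f i c + (S.map f').sum = f j c' + (T.map f').sum →
        i = j ∧ c = c' ∧ S = T := by
  obtain ⟨e, he⟩ := Countable.exists_injective_nat 𝒳
  set B : ℕ := N + 2 with hBdef
  set M : ℕ := r + 1 with hMdef
  -- natural-number encodings
  set F : Fin (r + 1) → 𝒳 → ℕ := fun i c => (i : ℕ) + M * B ^ (2 * e c) with hF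
  set F' : 𝒳 → ℕ := fun x => M * B ^ (2 * e x + 1) with hF'
  refine ⟨fun i c => (F i c : ℝ), fun x => (F' x : ℝ), ?_⟩
  intro i j c c' S T hS hT heq
  -- reduce the real equation to a natural-number equation
  have hnat : F i c + (S.map F').sum = F j c' + (T.map F').sum := by
    have : ((F i c + (S.map F').sum : ℕ) : ℝ) = ((F j c' + (T.map F').sum : ℕ) : ℝ) := by
      push_cast [Nat.cast_multiset_sum, Multiset.map_map]
      exact heq
    exact_mod_cast this
  -- combine element and multiset into one multiset of exponents
  have hWsum : ∀ (a : ℕ) (W : Multiset 𝒳) (d : Fin (r + 1)),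
      F' = (fun x => M * B ^ (2 * e x + 1)) →
      (d : ℕ) + M * B ^ (2 * a) + (W.map F').sum
        = (d : ℕ) + M * (((2 * a) ::ₘ W.map (fun x => 2 * e x + 1)).map (B ^ ·)).sum := by
    intro a W d hF'eq
    rw [hF'eq]
    simp only [Multiset.map_cons, Multiset.sum_cons, Multiset.map_map, Function.comp]
    rw [Multiset.sum_map_mul_left]
    ring
  have hUsum := hWsum (e c) S i rfl
  have hVsum := hWsum (e c') T j rfl
  rw [show F i c + (S.map F').sum = (i : ℕ) + M * B ^ (2 * e c) + (S.map F').sum from rfl,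
    show F j c' + (T.map F').sum = (j : ℕ) + M * B ^ (2 * e c') + (T.map F').sum from rfl,
    hUsum, hVsum] at hnat
  -- extract i = j
  have hij : (i : ℕ) = (j : ℕ) := by
    have := congrArg (· % M) hnat
    simpa [Nat.add_mul_mod_self_left, Nat.mod_eq_of_lt (show (i : ℕ) < M from i.isLt),
      Nat.mod_eq_of_lt (show (j : ℕ) < M from j.isLt)] using this
  have hMpos : 0 < M := Nat.succ_pos r
  have hsums : ((((2 * e c) ::ₘ S.map (fun x => 2 * e x + 1)).map (B ^ ·)).sum)
      = ((((2 * e c') ::ₘ T.map (fun x => 2 * e x + 1)).map (B ^ ·)).sum) := by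
    refine Nat.eq_of_mul_eq_mul_left hMpos ?_
    omega
  -- counts are small
  have hcount : ∀ (W : Multiset 𝒳) (a : ℕ), Multiset.card W < N →
      ∀ b, Multiset.count b (a ::ₘ W.map (fun x => 2 * e x + 1)) < B := by
    intro W a hW b
    have h1 : Multiset.count b (W.map (fun x => 2 * e x + 1))
        ≤ Multiset.card (W.map (fun x => 2 * e x + 1)) := Multiset.count_le_card b _
    rw [Multiset.card_map] at h1
    have h2 : Multiset.count b (a ::ₘ W.map (fun x => 2 * e x + 1))
        ≤ Multiset.count b (W.map (fun x => 2 * e x + 1)) + 1 := by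
      rw [Multiset.count_cons]
      split <;> omega
    omega
  have hUV : (2 * e c) ::ₘ S.map (fun x => 2 * e x + 1)
      = (2 * e c') ::ₘ T.map (fun x => 2 * e x + 1) :=
    multiset_pow_sum_inj B (by omega) _ _ (hcount S (2 * e c) hS) (hcount T (2 * e c') hT) hsums
  -- decode c = c'
  have hmem : (2 * e c) ∈ (2 * e c') ::ₘ T.map (fun x => 2 * e x + 1) := by
    rw [← hUV]; exact Multiset.mem_cons_self _ _
  have hcc' : c = c' := by
    rcases Multiset.mem_cons.mp hmem with h | h
    · exact he (by omega)
    · obtain ⟨x, _, hx⟩ := Multiset.mem_map.mp h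
      omega
  -- decode S = T
  have hST : S = T := by
    rw [hcc'] at hUV
    have hmap : S.map (fun x => 2 * e x + 1) = T.map (fun x => 2 * e x + 1) :=
      (Multiset.cons_inj_right _).mp hUV
    have hginj : Function.Injective (fun x : 𝒳 => 2 * e x + 1) := by
      intro x y hxy
      apply he
      simp only at hxy
      omega
    exact Multiset.map_injective hginj hmap
  exact ⟨Fin.ext hij, hcc', hST⟩
end

section
/- Let G be a simple graph, v a vertex of G, and k ∈ ℕ, and let H = G_v^k be the subgraph of G induced by the set of vertices at shortest-path distance at most k from v (including v itself). Then H contains a cycle of odd length if and only if there exist vertices u and w adjacent in G with dist(v,u) = dist(v,w) ≤ k. -/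
open SimpleGraph Walk

/-- A closed path has length zero. -/
private lemma closed_path_length_zero {V : Type*} {G : SimpleGraph V} {z : V} (q : G.Walk z z)
    (hq : q.IsPath) : q.length = 0 := by
  have h : (⟨q, hq⟩ : G.Path z z) = SimpleGraph.Path.nil := SimpleGraph.Path.loop_eq _
  have hq0 : q = Walk.nil := congrArg Subtype.val h
  simp [hq0]

/-- If a path from `a` to `b` contains the edge `s(b, a)`, it has length 1. -/
private lemma path_loop_edge {V : Type*} {G : SimpleGraph V} {a b : V} (p : G.Walk a b)
    (hp : p.IsPath) (he : s(b, a) ∈ p.edges) : p.length = 1 := by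
  induction p with
  | nil => simp at he
  | @cons a c b h q ih =>
    rw [Walk.edges_cons, List.mem_cons] at he
    rcases he with he | he
    · have hq : q.IsPath := hp.of_cons
      rw [Sym2.eq_iff] at he
      rcases he with ⟨h1, h2⟩ | ⟨h1, -⟩
      · subst h2; subst h1
        rw [Walk.length_cons, closed_path_length_zero q hq]
      · subst h1
        rw [Walk.length_cons, closed_path_length_zero q hq]
    · exfalso
      have haq : a ∈ q.support := q.snd_mem_support_of_mem_edges he
      have := hp.support_nodup
      rw [Walk.support_cons, List.nodup_cons] at this
      exact this.1 haq

/-- A closed walk of odd length contains an odd cycle. -/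
private lemma exists_odd_cycle {V : Type*} {G : SimpleGraph V} :
    ∀ n {x : V} (c : G.Walk x x), c.length = n → Odd n →
      ∃ (y : V) (c' : G.Walk y y), c'.IsCycle ∧ Odd c'.length := by
  intro n
  induction n using Nat.strong_induction_on with
  | _ n ih =>
    intro x c hc hodd
    by_cases hnd : c.support.tail.Nodup
    · cases c with
      | nil => subst hc; simp at hodd
      | @cons _ b _ h q =>
        have hq : q.IsPath := by
          rw [Walk.isPath_def]; simpa using hnd
        refine ⟨x, Walk.cons h q, ?_, hc ▸ hodd⟩
        rw [SimpleGraph.Walk.cons_isCycle_iff]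
        refine ⟨hq, fun he => ?_⟩
        have h1 := path_loop_edge q hq he
        rw [Walk.length_cons, h1] at hc
        subst hc
        simp [Nat.odd_iff] at hodd
    · classical
      obtain ⟨a, ha2⟩ : ∃ a, 2 ≤ c.support.tail.count a := by
        by_contra hcon
        push_neg at hcon
        exact hnd (List.nodup_iff_count_le_one.mpr fun a => by
          have := hcon a; omega)
      have hamem : a ∈ c.support := by
        apply List.mem_of_mem_tail
        exact List.count_pos_iff.mp (by omega)
      have hlenrot : (c.rotate a hamem).length = n := by
        have h1 := congrArg Walk.length (c.take_spec hamem)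
        have h2 : (c.rotate a hamem).length
            = (c.dropUntil a hamem).length + (c.takeUntil a hamem).length :=
          Walk.length_append _ _
        rw [Walk.length_append] at h1
        omega
      have hcountrot : 2 ≤ (c.rotate a hamem).support.tail.count a := by
        have := (c.support_rotate a hamem).perm.count_eq a
        omega
      generalize hc' : c.rotate a hamem = c' at hlenrot hcountrot
      cases c' with
      | nil => subst hlenrot; simp at hodd
      | @cons _ b _ h q =>
        rw [Walk.support_cons, List.tail_cons] at hcountrot
        have haq : a ∈ q.support := List.count_pos_iff.mp (by omega)
        have hspec := q.take_spec haq
        have hlen : (q.takeUntil a haq).length + (q.dropUntil a haq).length = q.length := by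
          have := congrArg Walk.length hspec
          rwa [Walk.length_append] at this
        have hqlen : q.length + 1 = n := by
          rw [Walk.length_cons] at hlenrot; omega
        have hd1 : 1 ≤ (q.dropUntil a haq).length := by
          by_contra hcon
          have hd0 : (q.dropUntil a haq).length = 0 := by omega
          have hdnil : q.dropUntil a haq = Walk.nil := Walk.nil_iff_eq_nil.mp (Walk.length_eq_zero_iff.mp hd0)
          have hcnt1 := q.count_support_takeUntil_eq_one haq
          have hsupp := congrArg Walk.support hspec
          rw [Walk.support_append, hdnil] at hsupp
          simp at hsupp
          rw [← hsupp] at hcountrot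
          omega
        have hsum : (1 + (q.takeUntil a haq).length) + (q.dropUntil a haq).length = n := by
          omega
        rcases Nat.odd_add.mp (hsum ▸ hodd) |>.symm with h'
        by_cases hodd1 : Odd (1 + (q.takeUntil a haq).length)
        · exact ih (1 + (q.takeUntil a haq).length) (by omega) (Walk.cons h (q.takeUntil a haq))
            (by rw [Walk.length_cons]; omega) hodd1
        · have hodd2 : Odd (q.dropUntil a haq).length := by
            rw [Nat.odd_iff] at hodd ⊢
            rw [Nat.not_odd_iff_even, Nat.even_iff] at hodd1
            omega
          exact ih (q.dropUntil a haq).length (by omega) (q.dropUntil a haq) rfl hodd2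

/-- Lift a walk whose support lies in `s` to the induced subgraph. -/
private lemma lift_walk {V : Type*} {G : SimpleGraph V} {s : Set V} :
    ∀ {a b : V} (p : G.Walk a b) (ha : a ∈ s) (hb : b ∈ s)
      (hp : ∀ z ∈ p.support, z ∈ s),
      ∃ q : (G.induce s).Walk ⟨a, ha⟩ ⟨b, hb⟩, q.length = p.length := by
  intro a b p
  induction p with
  | nil => intro ha _ _; exact ⟨Walk.nil, rfl⟩
  | @cons a c b h q ih =>
    intro ha hb hp
    have hc : c ∈ s := hp c (by simp)
    obtain ⟨q', hq'⟩ := ih hc hb (fun z hz => hp z (by simp [hz]))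
    refine ⟨Walk.cons (by simp [h]) q', by simp [hq']⟩

/-- The `k`-hop neighborhood subgraph of a vertex `v` (the subgraph induced by the
vertices at shortest-path distance at most `k` from `v`, including `v` itself) contains a
cycle of odd length if and only if there are vertices `u` and `w` adjacent in `G` with
`dist v u = dist v w ≤ k`. -/
theorem odd_cycle_in_khop_iff_adj_dist_eq {V : Type*} (G : SimpleGraph V) (v : V) (k : ℕ)
    (s : Set V) (hs : s = {u | G.Reachable v u ∧ G.dist v u ≤ k} ∪ {v}) :
    (∃ (x : s) (c : (G.induce s).Walk x x), c.IsCycle ∧ Odd c.length) ↔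
      (∃ u w : V, G.Adj u w ∧ G.Reachable v u ∧ G.Reachable v w ∧
        G.dist v u = G.dist v w ∧ G.dist v u ≤ k) := by
  classical
  have hmem : ∀ z ∈ s, G.Reachable v z ∧ G.dist v z ≤ k := by
    intro z hz
    rw [hs] at hz
    rcases hz with hz | hz
    · exact hz
    · rcases hz with rfl
      exact ⟨Reachable.refl _, by simp [SimpleGraph.dist_self]⟩
  constructor
  · rintro ⟨x, c, -, hodd⟩
    by_contra hcon
    push_neg at hcon
    have key : ∀ p q : V, G.Reachable v p → G.Adj p q → G.dist v q ≤ G.dist v p + 1 := by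
      intro p q hr hadj
      obtain ⟨w', hw'⟩ := hr.exists_walk_length_eq_dist
      have := SimpleGraph.dist_le (w'.concat hadj)
      rwa [Walk.length_concat, hw'] at this
    have valid : ∀ z w : ↥s, (G.induce s).Adj z w →
        decide (G.dist v ↑z % 2 = 0) ≠ decide (G.dist v ↑w % 2 = 0) := by
      intro z w hadj
      have hadj' : G.Adj ↑z ↑w := hadj
      obtain ⟨hrz, hkz⟩ := hmem ↑z z.2
      obtain ⟨hrw, hkw⟩ := hmem ↑w w.2
      have hne : G.dist v ↑z ≠ G.dist v ↑w := by
        intro he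
        have := hcon ↑z ↑w hadj' hrz hrw he
        omega
      have h1 := key ↑z ↑w hrz hadj'
      have h2 := key ↑w ↑z hrw hadj'.symm
      intro heq
      rw [decide_eq_decide] at heq
      omega
    let col : (G.induce s).Coloring Bool :=
      SimpleGraph.Coloring.mk (fun z => decide (G.dist v ↑z % 2 = 0)) (fun h => valid _ _ h)
    have := (col.even_length_iff_congr c).mpr Iff.rfl
    rw [← Nat.not_odd_iff_even] at this -- deprecated ok
    exact this hodd
  · rintro ⟨u, w, hadj, hru, hrw, hdeq, hdk⟩
    obtain ⟨p, hpl⟩ := hru.exists_walk_length_eq_dist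
    obtain ⟨q, hql⟩ := hrw.exists_walk_length_eq_dist
    have hsub : ∀ (z t : V) (r : G.Walk v t), r.length = G.dist v t → G.dist v t ≤ k →
        z ∈ r.support → z ∈ s := by
      intro z t r hrl hrk hz
      rw [hs]
      left
      have h1 : G.dist v z ≤ r.length :=
        le_trans (SimpleGraph.dist_le (r.takeUntil z hz)) (r.length_takeUntil_le hz)
      exact ⟨⟨r.takeUntil z hz⟩, by omega⟩
    let c0 : G.Walk v v := p.append (Walk.cons hadj q.reverse)
    have hsupp : ∀ z ∈ c0.support, z ∈ s := by
      intro z hz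
      rw [Walk.mem_support_append_iff] at hz
      rcases hz with hz | hz
      · exact hsub z u p hpl hdk hz
      · rw [Walk.support_cons, List.mem_cons] at hz
        rcases hz with rfl | hz
        · exact hsub _ _ p hpl hdk p.end_mem_support
        · rw [Walk.support_reverse, List.mem_reverse] at hz
          exact hsub z w q hql (hdeq ▸ hdk) hz
    have hv : v ∈ s := by rw [hs]; right; rfl
    obtain ⟨c1, hc1⟩ := lift_walk c0 hv hv hsupp
    have hc0len : c0.length = 2 * G.dist v u + 1 := by
      show (p.append (Walk.cons hadj q.reverse)).length = _
      rw [Walk.length_append, Walk.length_cons, Walk.length_reverse, hpl, hql, ← hdeq]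
      ring
    have hodd : Odd c1.length := by
      rw [hc1, hc0len]
      exact ⟨G.dist v u, by ring⟩
    obtain ⟨y, c', hcyc, hodd'⟩ := exists_odd_cycle c1.length c1 rfl hodd
    exact ⟨y, c', hcyc, hodd'⟩
end
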